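/- Let w, t, u, v ∈ Q and let 1 ≤ i, k, r, p ≤ m with i ≠ k and r ≠ p. Then the four-fold commutator [[E_{i,w}, E_{k,t}], [E_{r,u}, E*_{p,v}]] acts on M as follows: (1) if i = p, it sends (z,x,f) to (z, x + f(x_r)·⟨v,u⟩·⟨t,w⟩·x_k − f(x_k)·⟨w,t⟩·⟨u,v⟩·x_r, f) (which is the identity when moreover k = r); (2) if k = p, it sends (z,x,f) to (z, x − f(x_r)·⟨v,u⟩·⟨w,t⟩·x_i + f(x_i)·⟨t,w⟩·⟨u,v⟩·x_r, f) (which is the identity when moreover i = r); (3) if i ≠ p and k ≠ p, it is the identity automorphism of M. -/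

import Mathlib

open QuadraticMap
open scoped commutatorElement

/-- The DSER elementary orthogonal transformation `E_{i,w}` on `M = Q ⊕ P ⊕ P*`,
`P = A^m`:  `E_{i,w}(z,x,f) = (z − f(xᵢ)•w, x + ⟨w,z⟩•xᵢ − f(xᵢ)·q(w)•xᵢ, f)`. -/
noncomputable def Eplus {A Q : Type*} [CommRing A] [AddCommGroup Q] [Module A Q]
    {m : ℕ} (q : QuadraticForm A Q) (i : Fin m) (w : Q) :
    (Q × (Fin m → A) × (Fin m → A)) ≃ₗ[A] (Q × (Fin m → A) × (Fin m → A)) where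
  toFun p := (p.1 - p.2.2 i • w,
    p.2.1 + polar ⇑q w p.1 • (Pi.single i 1 : Fin m → A)
      - (p.2.2 i * q w) • (Pi.single i 1 : Fin m → A),
    p.2.2)
  invFun p := (p.1 + p.2.2 i • w,
    p.2.1 - polar ⇑q w p.1 • (Pi.single i 1 : Fin m → A)
      - (p.2.2 i * q w) • (Pi.single i 1 : Fin m → A),
    p.2.2)
  map_add' p p' := by
    obtain ⟨z, x, f⟩ := p
    obtain ⟨z', x', f'⟩ := p'
    refine Prod.ext ?_ (Prod.ext ?_ rfl)
    · show z + z' - (f i + f' i) • w = (z - f i • w) + (z' - f' i • w)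
      module
    · show x + x' + polar ⇑q w (z + z') • (Pi.single i 1 : Fin m → A)
        - ((f i + f' i) * q w) • (Pi.single i 1 : Fin m → A) = _
      rw [polar_add_right]
      show _ = (x + polar ⇑q w z • (Pi.single i 1 : Fin m → A) - (f i * q w) • (Pi.single i 1 : Fin m → A))
        + (x' + polar ⇑q w z' • (Pi.single i 1 : Fin m → A) - (f' i * q w) • (Pi.single i 1 : Fin m → A))
      module
  map_smul' a p := by
    obtain ⟨z, x, f⟩ := p
    refine Prod.ext ?_ (Prod.ext ?_ rfl)
    · show a • z - (a • f) i • w = a • (z - f i • w)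
      simp only [Pi.smul_apply, smul_eq_mul]
      module
    · show a • x + polar ⇑q w (a • z) • (Pi.single i 1 : Fin m → A)
        - ((a • f) i * q w) • (Pi.single i 1 : Fin m → A)
        = a • (x + polar ⇑q w z • (Pi.single i 1 : Fin m → A) - (f i * q w) • (Pi.single i 1 : Fin m → A))
      rw [polar_smul_right]
      simp only [Pi.smul_apply, smul_eq_mul]
      module
  left_inv p := by
    obtain ⟨z, x, f⟩ := p
    refine Prod.ext ?_ (Prod.ext ?_ rfl)
    · show z - f i • w + f i • w = z
      module
    · show x + polar ⇑q w z • (Pi.single i 1 : Fin m → A) - (f i * q w) • (Pi.single i 1 : Fin m → A)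
        - polar ⇑q w (z - f i • w) • (Pi.single i 1 : Fin m → A)
        - (f i * q w) • (Pi.single i 1 : Fin m → A) = x
      rw [polar_sub_right, polar_smul_right, polar_self]
      simp only [smul_eq_mul]
      module
  right_inv p := by
    obtain ⟨z, x, f⟩ := p
    refine Prod.ext ?_ (Prod.ext ?_ rfl)
    · show z + f i • w - f i • w = z
      module
    · show x - polar ⇑q w z • (Pi.single i 1 : Fin m → A) - (f i * q w) • (Pi.single i 1 : Fin m → A)
        + polar ⇑q w (z + f i • w) • (Pi.single i 1 : Fin m → A)
        - (f i * q w) • (Pi.single i 1 : Fin m → A) = x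
      rw [polar_add_right, polar_smul_right, polar_self]
      simp only [smul_eq_mul]
      module

/-- The DSER elementary orthogonal transformation `E*_{i,w}` on `M = Q ⊕ P ⊕ P*`:
`E*_{i,w}(z,x,f) = (z − fᵢ(x)•w, x, f + ⟨w,z⟩•fᵢ − fᵢ(x)·q(w)•fᵢ)`. -/
noncomputable def Estar {A Q : Type*} [CommRing A] [AddCommGroup Q] [Module A Q]
    {m : ℕ} (q : QuadraticForm A Q) (i : Fin m) (w : Q) :
    (Q × (Fin m → A) × (Fin m → A)) ≃ₗ[A] (Q × (Fin m → A) × (Fin m → A)) where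
  toFun p := (p.1 - p.2.1 i • w,
    p.2.1,
    p.2.2 + polar ⇑q w p.1 • (Pi.single i 1 : Fin m → A)
      - (p.2.1 i * q w) • (Pi.single i 1 : Fin m → A))
  invFun p := (p.1 + p.2.1 i • w,
    p.2.1,
    p.2.2 - polar ⇑q w p.1 • (Pi.single i 1 : Fin m → A)
      - (p.2.1 i * q w) • (Pi.single i 1 : Fin m → A))
  map_add' p p' := by
    obtain ⟨z, x, f⟩ := p
    obtain ⟨z', x', f'⟩ := p'
    refine Prod.ext ?_ (Prod.ext rfl ?_)
    · show z + z' - (x i + x' i) • w = (z - x i • w) + (z' - x' i • w)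
      module
    · show f + f' + polar ⇑q w (z + z') • (Pi.single i 1 : Fin m → A)
        - ((x i + x' i) * q w) • (Pi.single i 1 : Fin m → A) = _
      rw [polar_add_right]
      show _ = (f + polar ⇑q w z • (Pi.single i 1 : Fin m → A)
          - (x i * q w) • (Pi.single i 1 : Fin m → A))
        + (f' + polar ⇑q w z' • (Pi.single i 1 : Fin m → A)
          - (x' i * q w) • (Pi.single i 1 : Fin m → A))
      module
  map_smul' a p := by
    obtain ⟨z, x, f⟩ := p
    refine Prod.ext ?_ (Prod.ext rfl ?_)
    · show a • z - (a • x) i • w = a • (z - x i • w)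
      simp only [Pi.smul_apply, smul_eq_mul]
      module
    · show a • f + polar ⇑q w (a • z) • (Pi.single i 1 : Fin m → A)
        - ((a • x) i * q w) • (Pi.single i 1 : Fin m → A)
        = a • (f + polar ⇑q w z • (Pi.single i 1 : Fin m → A)
          - (x i * q w) • (Pi.single i 1 : Fin m → A))
      rw [polar_smul_right]
      simp only [Pi.smul_apply, smul_eq_mul]
      module
  left_inv p := by
    obtain ⟨z, x, f⟩ := p
    refine Prod.ext ?_ (Prod.ext rfl ?_)
    · show z - x i • w + x i • w = z
      module
    · show f + polar ⇑q w z • (Pi.single i 1 : Fin m → A)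
        - (x i * q w) • (Pi.single i 1 : Fin m → A)
        - polar ⇑q w (z - x i • w) • (Pi.single i 1 : Fin m → A)
        - (x i * q w) • (Pi.single i 1 : Fin m → A) = f
      rw [polar_sub_right, polar_smul_right, polar_self]
      simp only [smul_eq_mul]
      module
  right_inv p := by
    obtain ⟨z, x, f⟩ := p
    refine Prod.ext ?_ (Prod.ext rfl ?_)
    · show z + x i • w - x i • w = z
      module
    · show f - polar ⇑q w z • (Pi.single i 1 : Fin m → A)
        - (x i * q w) • (Pi.single i 1 : Fin m → A)
        + polar ⇑q w (z + x i • w) • (Pi.single i 1 : Fin m → A)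
        - (x i * q w) • (Pi.single i 1 : Fin m → A) = f
      rw [polar_add_right, polar_smul_right, polar_self]
      simp only [smul_eq_mul]
      module


section Helpers

variable {A Q : Type*} [CommRing A] [AddCommGroup Q] [Module A Q] {m : ℕ}

lemma Eplus_apply (q : QuadraticForm A Q) (i : Fin m) (w : Q) (z : Q) (x f : Fin m → A) :
    Eplus q i w (z, x, f) = (z - f i • w,
      x + polar ⇑q w z • (Pi.single i 1 : Fin m → A) - (f i * q w) • (Pi.single i 1 : Fin m → A),
      f) := rfl

lemma Eplus_inv_apply (q : QuadraticForm A Q) (i : Fin m) (w : Q) (z : Q) (x f : Fin m → A) :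
    (Eplus q i w)⁻¹ (z, x, f) = (z + f i • w,
      x - polar ⇑q w z • (Pi.single i 1 : Fin m → A) - (f i * q w) • (Pi.single i 1 : Fin m → A),
      f) := rfl

lemma Estar_apply (q : QuadraticForm A Q) (i : Fin m) (w : Q) (z : Q) (x f : Fin m → A) :
    Estar q i w (z, x, f) = (z - x i • w, x,
      f + polar ⇑q w z • (Pi.single i 1 : Fin m → A) - (x i * q w) • (Pi.single i 1 : Fin m → A)) := rfl

lemma Estar_inv_apply (q : QuadraticForm A Q) (i : Fin m) (w : Q) (z : Q) (x f : Fin m → A) :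
    (Estar q i w)⁻¹ (z, x, f) = (z + x i • w, x,
      f - polar ⇑q w z • (Pi.single i 1 : Fin m → A) - (x i * q w) • (Pi.single i 1 : Fin m → A)) := rfl

lemma comm_EE (q : QuadraticForm A Q) (i k : Fin m) (w t : Q) (z : Q) (x f : Fin m → A) :
    ⁅Eplus q i w, Eplus q k t⁆ (z, x, f)
      = (z, x - (f k * polar ⇑q w t) • (Pi.single i 1 : Fin m → A)
              + (f i * polar ⇑q t w) • (Pi.single k 1 : Fin m → A), f) := by
  show (Eplus q i w) ((Eplus q k t) ((Eplus q i w)⁻¹ ((Eplus q k t)⁻¹ (z,x,f)))) = _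
  rw [Eplus_inv_apply, Eplus_inv_apply, Eplus_apply, Eplus_apply]
  refine Prod.ext ?_ (Prod.ext ?_ rfl)
  · show z + f k • t + f i • w - f k • t - f i • w = z
    module
  · simp only [polar_add_right, polar_sub_right, polar_smul_right, polar_self, smul_eq_mul]
    module

lemma comm_ES (q : QuadraticForm A Q) (r p : Fin m) (hrp : r ≠ p) (u v : Q)
    (z : Q) (x f : Fin m → A) :
    ⁅Eplus q r u, Estar q p v⁆ (z, x, f)
      = (z, x - (x p * polar ⇑q u v) • (Pi.single r 1 : Fin m → A),
            f + (f r * polar ⇑q v u) • (Pi.single p 1 : Fin m → A)) := by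
  show (Eplus q r u) ((Estar q p v) ((Eplus q r u)⁻¹ ((Estar q p v)⁻¹ (z,x,f)))) = _
  rw [Estar_inv_apply, Eplus_inv_apply, Estar_apply, Eplus_apply]
  have h1 : (Pi.single p (1:A) : Fin m → A) r = 0 := Pi.single_eq_of_ne hrp 1
  have h2 : (Pi.single r (1:A) : Fin m → A) p = 0 := Pi.single_eq_of_ne hrp.symm 1
  simp only [Pi.add_apply, Pi.sub_apply, Pi.smul_apply, smul_eq_mul, h1, h2,
    mul_zero, sub_zero, add_zero]
  refine Prod.ext ?_ (Prod.ext ?_ ?_)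
  · show z + x p • v + f r • u - x p • v - f r • u = z
    module
  · simp only [polar_add_right, polar_sub_right, polar_smul_right, polar_self, smul_eq_mul]
    module
  · simp only [polar_add_right, polar_sub_right, polar_smul_right, polar_self, smul_eq_mul]
    module

lemma comm_SE (q : QuadraticForm A Q) (r p : Fin m) (hrp : r ≠ p) (u v : Q)
    (z : Q) (x f : Fin m → A) :
    ⁅Estar q p v, Eplus q r u⁆ (z, x, f)
      = (z, x + (x p * polar ⇑q u v) • (Pi.single r 1 : Fin m → A),
            f - (f r * polar ⇑q v u) • (Pi.single p 1 : Fin m → A)) := by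
  show (Estar q p v) ((Eplus q r u) ((Estar q p v)⁻¹ ((Eplus q r u)⁻¹ (z,x,f)))) = _
  rw [Eplus_inv_apply, Estar_inv_apply, Eplus_apply, Estar_apply]
  have h1 : (Pi.single p (1:A) : Fin m → A) r = 0 := Pi.single_eq_of_ne hrp 1
  have h2 : (Pi.single r (1:A) : Fin m → A) p = 0 := Pi.single_eq_of_ne hrp.symm 1
  simp only [Pi.add_apply, Pi.sub_apply, Pi.smul_apply, smul_eq_mul, h1, h2,
    mul_zero, sub_zero, add_zero]
  refine Prod.ext ?_ (Prod.ext ?_ ?_)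
  · show z + f r • u + x p • v - f r • u - x p • v = z
    module
  · simp only [polar_add_right, polar_sub_right, polar_smul_right, polar_self, smul_eq_mul]
    module
  · simp only [polar_add_right, polar_sub_right, polar_smul_right, polar_self, smul_eq_mul]
    module

lemma fourfold_expand (q : QuadraticForm A Q) (i k r p : Fin m) (w t u v : Q)
    (z : Q) (x f : Fin m → A) :
    ⁅⁅Eplus q i w, Eplus q k t⁆, ⁅Eplus q r u, Estar q p v⁆⁆ (z, x, f)
      = ⁅Eplus q i w, Eplus q k t⁆ (⁅Eplus q r u, Estar q p v⁆
          (⁅Eplus q k t, Eplus q i w⁆ (⁅Estar q p v, Eplus q r u⁆ (z, x, f)))) := by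
  rw [show ⁅⁅Eplus q i w, Eplus q k t⁆, ⁅Eplus q r u, Estar q p v⁆⁆
      = ⁅Eplus q i w, Eplus q k t⁆ * ⁅Eplus q r u, Estar q p v⁆
        * ⁅Eplus q k t, Eplus q i w⁆ * ⁅Estar q p v, Eplus q r u⁆ from by
    rw [commutatorElement_def, commutatorElement_inv, commutatorElement_inv]]
  rfl

lemma part1 (q : QuadraticForm A Q) (i k r : Fin m) (hik : i ≠ k) (hri : r ≠ i)
    (w t u v : Q) (z : Q) (x f : Fin m → A) :
    ⁅⁅Eplus q i w, Eplus q k t⁆, ⁅Eplus q r u, Estar q i v⁆⁆ (z, x, f)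
      = (z, x + (f r * polar ⇑q v u * polar ⇑q t w) • (Pi.single k 1 : Fin m → A)
              - (f k * polar ⇑q w t * polar ⇑q u v) • (Pi.single r 1 : Fin m → A), f) := by
  rw [fourfold_expand, comm_SE q r i hri, comm_EE, comm_ES q r i hri, comm_EE]
  have h1 : (Pi.single i (1:A) : Fin m → A) k = 0 := Pi.single_eq_of_ne hik.symm 1
  have h2 : (Pi.single i (1:A) : Fin m → A) r = 0 := Pi.single_eq_of_ne hri 1
  have h3 : (Pi.single r (1:A) : Fin m → A) i = 0 := Pi.single_eq_of_ne hri.symm 1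
  have h4 : (Pi.single k (1:A) : Fin m → A) i = 0 := Pi.single_eq_of_ne hik 1
  simp only [Pi.add_apply, Pi.sub_apply, Pi.smul_apply, smul_eq_mul, h1, h2, h3, h4,
    Pi.single_eq_same, mul_zero, mul_one, sub_zero, add_zero, zero_add]
  refine Prod.ext rfl (Prod.ext ?_ ?_)
  · module
  · module

lemma part3 (q : QuadraticForm A Q) (i k r : Fin m) (hik : i ≠ k) (hrk : r ≠ k)
    (w t u v : Q) (z : Q) (x f : Fin m → A) :
    ⁅⁅Eplus q i w, Eplus q k t⁆, ⁅Eplus q r u, Estar q k v⁆⁆ (z, x, f)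
      = (z, x - (f r * polar ⇑q v u * polar ⇑q w t) • (Pi.single i 1 : Fin m → A)
              + (f i * polar ⇑q t w * polar ⇑q u v) • (Pi.single r 1 : Fin m → A), f) := by
  rw [fourfold_expand, comm_SE q r k hrk, comm_EE, comm_ES q r k hrk, comm_EE]
  have h1 : (Pi.single k (1:A) : Fin m → A) i = 0 := Pi.single_eq_of_ne hik 1
  have h2 : (Pi.single k (1:A) : Fin m → A) r = 0 := Pi.single_eq_of_ne hrk 1
  have h3 : (Pi.single r (1:A) : Fin m → A) k = 0 := Pi.single_eq_of_ne hrk.symm 1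
  have h4 : (Pi.single i (1:A) : Fin m → A) k = 0 := Pi.single_eq_of_ne hik.symm 1
  simp only [Pi.add_apply, Pi.sub_apply, Pi.smul_apply, smul_eq_mul, h1, h2, h3, h4,
    Pi.single_eq_same, mul_zero, mul_one, sub_zero, add_zero, zero_add]
  refine Prod.ext rfl (Prod.ext ?_ ?_)
  · module
  · module

lemma part5 (q : QuadraticForm A Q) (i k r p : Fin m) (hrp : r ≠ p)
    (hip : i ≠ p) (hkp : k ≠ p) (w t u v : Q) :
    ⁅⁅Eplus q i w, Eplus q k t⁆, ⁅Eplus q r u, Estar q p v⁆⁆ = 1 := by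
  apply LinearEquiv.toLinearMap_injective
  apply LinearMap.ext
  rintro ⟨z, x, f⟩
  show ⁅⁅Eplus q i w, Eplus q k t⁆, ⁅Eplus q r u, Estar q p v⁆⁆ (z, x, f) = (z, x, f)
  rw [fourfold_expand, comm_SE q r p hrp, comm_EE, comm_ES q r p hrp, comm_EE]
  have h1 : (Pi.single p (1:A) : Fin m → A) i = 0 := Pi.single_eq_of_ne hip 1
  have h2 : (Pi.single p (1:A) : Fin m → A) k = 0 := Pi.single_eq_of_ne hkp 1
  have h3 : (Pi.single p (1:A) : Fin m → A) r = 0 := Pi.single_eq_of_ne hrp 1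
  have h4 : (Pi.single r (1:A) : Fin m → A) p = 0 := Pi.single_eq_of_ne hrp.symm 1
  have h5 : (Pi.single i (1:A) : Fin m → A) p = 0 := Pi.single_eq_of_ne hip.symm 1
  have h6 : (Pi.single k (1:A) : Fin m → A) p = 0 := Pi.single_eq_of_ne hkp.symm 1
  simp only [Pi.add_apply, Pi.sub_apply, Pi.smul_apply, smul_eq_mul, h1, h2, h3, h4, h5, h6,
    Pi.single_eq_same, mul_zero, mul_one, sub_zero, add_zero, zero_add]
  refine Prod.ext rfl (Prod.ext ?_ ?_)
  · module
  · module

lemma part2 (q : QuadraticForm A Q) (i k : Fin m) (hik : i ≠ k) (w t u v : Q) :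
    ⁅⁅Eplus q i w, Eplus q k t⁆, ⁅Eplus q k u, Estar q i v⁆⁆ = 1 := by
  apply LinearEquiv.toLinearMap_injective
  apply LinearMap.ext
  rintro ⟨z, x, f⟩
  show ⁅⁅Eplus q i w, Eplus q k t⁆, ⁅Eplus q k u, Estar q i v⁆⁆ (z, x, f) = (z, x, f)
  rw [part1 q i k k hik hik.symm]
  refine Prod.ext rfl (Prod.ext ?_ rfl)
  rw [polar_comm ⇑q v u, polar_comm ⇑q t w]
  module

lemma part4 (q : QuadraticForm A Q) (i k : Fin m) (hik : i ≠ k) (w t u v : Q) :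
    ⁅⁅Eplus q i w, Eplus q k t⁆, ⁅Eplus q i u, Estar q k v⁆⁆ = 1 := by
  apply LinearEquiv.toLinearMap_injective
  apply LinearMap.ext
  rintro ⟨z, x, f⟩
  show ⁅⁅Eplus q i w, Eplus q k t⁆, ⁅Eplus q i u, Estar q k v⁆⁆ (z, x, f) = (z, x, f)
  rw [part3 q i k i hik hik]
  refine Prod.ext rfl (Prod.ext ?_ rfl)
  rw [polar_comm ⇑q v u, polar_comm ⇑q t w]
  module

end Helpers

theorem fourfold_commutator_EplusEplus_EplusEstar
    {A Q : Type*} [CommRing A] [Invertible (2 : A)] [AddCommGroup Q] [Module A Q]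
    {m : ℕ} (q : QuadraticForm A Q) (i k r p : Fin m)
    (hik : i ≠ k) (hrp : r ≠ p) (w t u v : Q) :
    (i = p → ∀ (z : Q) (x f : Fin m → A),
      ⁅⁅Eplus q i w, Eplus q k t⁆, ⁅Eplus q r u, Estar q p v⁆⁆ (z, x, f)
        = (z,
           x + (f r * polar ⇑q v u * polar ⇑q t w) • (Pi.single k 1 : Fin m → A)
             - (f k * polar ⇑q w t * polar ⇑q u v) • (Pi.single r 1 : Fin m → A),
           f)) ∧
    (i = p → k = r → ⁅⁅Eplus q i w, Eplus q k t⁆, ⁅Eplus q r u, Estar q p v⁆⁆ = 1) ∧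
    (k = p → ∀ (z : Q) (x f : Fin m → A),
      ⁅⁅Eplus q i w, Eplus q k t⁆, ⁅Eplus q r u, Estar q p v⁆⁆ (z, x, f)
        = (z,
           x - (f r * polar ⇑q v u * polar ⇑q w t) • (Pi.single i 1 : Fin m → A)
             + (f i * polar ⇑q t w * polar ⇑q u v) • (Pi.single r 1 : Fin m → A),
           f)) ∧
    (k = p → i = r → ⁅⁅Eplus q i w, Eplus q k t⁆, ⁅Eplus q r u, Estar q p v⁆⁆ = 1) ∧
    (i ≠ p → k ≠ p → ⁅⁅Eplus q i w, Eplus q k t⁆, ⁅Eplus q r u, Estar q p v⁆⁆ = 1) := by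
  
  refine ⟨?_, ?_, ?_, ?_, fun hip hkp => part5 q i k r p hrp hip hkp w t u v⟩
  · intro hip z x f
    subst hip
    exact part1 q i k r hik hrp w t u v z x f
  · intro hip hkr
    subst hip; subst hkr
    exact part2 q i k hik w t u v
  · intro hkp z x f
    subst hkp
    exact part3 q i k r hik hrp w t u v z x f
  · intro hkp hir
    subst hkp; subst hir
    exact part4 q i k hik w t u v
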